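/- arXiv:2107.09296 — 4 statements merged into one kernel-verified Lean document; each statement's English description precedes it below -/
import Mathlib

section
/- Let G be a probability measure on a finite parameter set Ω, and for each θ ∈ Ω let f(·|θ) be a probability mass function on a finite observation set Y with f(y|θ) > 0 for all y, θ. Suppose Ĝ maximizes the log-likelihood G ↦ Σ_{i=1}^n log(Σ_θ f(Y_i|θ) G(θ)) over all probability measures on Ω, for observations Y_1,...,Y_n. Then for any bounded function η : Ω → ℝ, the Ĝ-expectation of η equals the average over i of the posterior expectations: Σ_θ η(θ) Ĝ(θ) = (1/n) Σ_{i=1}^n [Σ_θ η(θ) f(Y_i|θ) Ĝ(θ)] / [Σ_θ f(Y_i|θ) Ĝ(θ)]. -/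
open Finset Real

lemma log_lb {x : ℝ} (hx : -(1/2) ≤ x) : x - 2*x^2 ≤ Real.log (1+x) := by
  have h1 : (0:ℝ) < 1 + x := by linarith
  have h2 := Real.log_le_sub_one_of_pos (x := (1+x)⁻¹) (by positivity)
  rw [Real.log_inv] at h2
  have h3 : 1 - (1+x)⁻¹ ≤ Real.log (1+x) := by linarith
  have h4 : 1 - (1+x)⁻¹ = x / (1+x) := by field_simp; ring
  rw [h4] at h3
  refine le_trans ?_ h3
  rw [le_div_iff₀ h1]
  nlinarith [sq_nonneg x]

/-- GMLE expectation equals average of posterior expectations. -/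
theorem stmt_0 {Ω 𝒴 : Type*} [Fintype Ω] [Nonempty Ω] [Fintype 𝒴] [Nonempty 𝒴]
    (f : 𝒴 → Ω → ℝ) (hf_pos : ∀ y θ, 0 < f y θ) (hf_pmf : ∀ θ, ∑ y, f y θ = 1)
    (n : ℕ) (hn : 0 < n) (Y : Fin n → 𝒴)
    (Ghat : Ω → ℝ) (hGhat_nonneg : ∀ θ, 0 ≤ Ghat θ) (hGhat_sum : ∑ θ, Ghat θ = 1)
    (hmax : ∀ G : Ω → ℝ, (∀ θ, 0 ≤ G θ) → ∑ θ, G θ = 1 →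
      ∑ i, Real.log (∑ θ, f (Y i) θ * G θ) ≤ ∑ i, Real.log (∑ θ, f (Y i) θ * Ghat θ))
    (η : Ω → ℝ) :
    ∑ θ, η θ * Ghat θ =
      (1 / n : ℝ) * ∑ i, (∑ θ, η θ * f (Y i) θ * Ghat θ) / (∑ θ, f (Y i) θ * Ghat θ) := by
  classical
  set m : Fin n → ℝ := fun i => ∑ θ, f (Y i) θ * Ghat θ with hm
  have hmpos : ∀ i, 0 < m i := by
    intro i
    obtain ⟨θ₁, hθ₁⟩ : ∃ θ, 0 < Ghat θ := by
      by_contra h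
      push_neg at h
      have h0 : ∀ θ, Ghat θ = 0 := fun θ => le_antisymm (h θ) (hGhat_nonneg θ)
      simp [h0] at hGhat_sum
    have h1 : 0 < f (Y i) θ₁ * Ghat θ₁ := mul_pos (hf_pos _ _) hθ₁
    exact lt_of_lt_of_le h1 (Finset.single_le_sum (f := fun θ => f (Y i) θ * Ghat θ)
      (fun θ _ => mul_nonneg (hf_pos _ _).le (hGhat_nonneg θ)) (mem_univ θ₁))
  set r : Ω → ℝ := fun θ => ∑ i, f (Y i) θ / m i with hr
  have hkey : ∀ θ₀, r θ₀ ≤ n := by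
    intro θ₀
    by_contra hS
    push_neg at hS
    set c : Fin n → ℝ := fun i => f (Y i) θ₀ / m i - 1 with hc
    have hcpos : ∀ i, -1 < c i := by
      intro i
      have : 0 < f (Y i) θ₀ / m i := div_pos (hf_pos _ _) (hmpos i)
      simp only [hc]; linarith
    have hcS : ∑ i, c i = r θ₀ - n := by
      simp [hc, Finset.sum_sub_distrib, hr]
    set S : ℝ := r θ₀ - n with hSdef
    have hSpos : 0 < S := by rw [hSdef]; linarith
    set C : ℝ := ∑ i, (c i)^2 with hC
    have hCnn : (0:ℝ) ≤ C := Finset.sum_nonneg (fun i _ => sq_nonneg (c i))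
    have hCpos : 0 < C := by
      rcases eq_or_lt_of_le hCnn with h | h
      · exfalso
        have hz : ∀ i ∈ (univ : Finset (Fin n)), (c i)^2 = 0 :=
          (Finset.sum_eq_zero_iff_of_nonneg (fun i _ => sq_nonneg (c i))).mp h.symm
        have hz2 : ∑ i, c i = 0 := Finset.sum_eq_zero (fun i hi =>
          pow_eq_zero_iff (n := 2) (by norm_num) |>.mp (hz i hi))
        rw [hcS] at hz2; linarith
      · exact h
    set t : ℝ := min (1/2) (S / (4*C)) with ht
    have htpos : 0 < t := lt_min (by norm_num) (by positivity)
    have htle : t ≤ 1/2 := min_le_left _ _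
    have htle2 : t ≤ S / (4*C) := min_le_right _ _
    set G : Ω → ℝ := fun θ => (1-t) * Ghat θ + t * (if θ = θ₀ then 1 else 0) with hG
    have hGnn : ∀ θ, 0 ≤ G θ := by
      intro θ
      have h1 : 0 ≤ (1-t) * Ghat θ := mul_nonneg (by linarith) (hGhat_nonneg θ)
      have h2 : 0 ≤ t * (if θ = θ₀ then (1:ℝ) else 0) := by
        split <;> [linarith; simp]
      simp only [hG]; linarith
    have hGsum : ∑ θ, G θ = 1 := by
      simp only [hG]
      rw [Finset.sum_add_distrib, ← Finset.mul_sum, ← Finset.mul_sum, hGhat_sum,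
        Finset.sum_ite_eq' univ θ₀ (fun _ => (1:ℝ))]
      simp
    have hval : ∀ i, ∑ θ, f (Y i) θ * G θ = m i * (1 + t * c i) := by
      intro i
      have h1 : ∑ θ, f (Y i) θ * G θ = (1-t) * m i + t * f (Y i) θ₀ := by
        simp only [hG, mul_add, Finset.sum_add_distrib]
        congr 1
        · rw [hm, Finset.mul_sum]; apply Finset.sum_congr rfl; intros; ring
        · rw [Finset.sum_eq_single θ₀]
          · rw [if_pos rfl]; ring
          · intro b _ hb; simp [hb]
          · intro h; exact absurd (mem_univ θ₀) h
      rw [h1, hc]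
      have h2 : m i * (f (Y i) θ₀ / m i) = f (Y i) θ₀ := mul_div_cancel₀ _ (hmpos i).ne'
      linear_combination (-t) * h2
    have hlb : ∀ i, Real.log (m i) + (t * c i - 2 * (t * c i)^2)
        ≤ Real.log (∑ θ, f (Y i) θ * G θ) := by
      intro i
      have hci := hcpos i
      rw [hval i, Real.log_mul (hmpos i).ne' (by nlinarith)]
      have hx : -(1/2) ≤ t * c i := by
        calc -(1/2) ≤ -t := by linarith
          _ = t * (-1) := by ring
          _ ≤ t * c i := mul_le_mul_of_nonneg_left hci.le htpos.le
      have := log_lb hx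
      linarith
    have hcontra := hmax G hGnn hGsum
    have hsum : ∑ i, (Real.log (m i) + (t * c i - 2 * (t * c i)^2)) ≤ ∑ i, Real.log (m i) :=
      le_trans (Finset.sum_le_sum (fun i _ => hlb i)) hcontra
    have hexp : ∑ i, (Real.log (m i) + (t * c i - 2 * (t * c i)^2))
        = ∑ i, Real.log (m i) + (t * S - 2 * t^2 * C) := by
      rw [Finset.sum_add_distrib]
      congr 1
      rw [← hcS, hC, Finset.sum_sub_distrib, ← Finset.mul_sum, Finset.mul_sum]
      congr 1
      rw [Finset.mul_sum]
      apply Finset.sum_congr rfl; intros; ring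
    rw [hexp] at hsum
    have hpos : 0 < t * S - 2 * t^2 * C := by
      have h1 : 2 * t * C ≤ S / 2 := by
        calc 2 * t * C = 2 * C * t := by ring
          _ ≤ 2 * C * (S / (4*C)) := by nlinarith
          _ = S / 2 := by field_simp; ring
      nlinarith
    linarith
  have hsum_r : ∑ θ, Ghat θ * r θ = n := by
    simp only [hr, Finset.mul_sum]
    rw [Finset.sum_comm]
    have h1 : ∀ i : Fin n, ∑ θ, Ghat θ * (f (Y i) θ / m i) = 1 := by
      intro i
      have h2 : ∀ θ, Ghat θ * (f (Y i) θ / m i) = (f (Y i) θ * Ghat θ) / m i := by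
        intro θ; ring
      simp only [h2]
      rw [← Finset.sum_div, hm, div_eq_one_iff_eq (hmpos i).ne']
    simp [h1]
  have heach : ∀ θ, Ghat θ * r θ = Ghat θ * n := by
    have hnn : ∀ θ ∈ (univ : Finset Ω), 0 ≤ Ghat θ * ((n:ℝ) - r θ) := fun θ _ =>
      mul_nonneg (hGhat_nonneg θ) (by linarith [hkey θ])
    have hzero : ∑ θ, Ghat θ * ((n:ℝ) - r θ) = 0 := by
      simp only [mul_sub, Finset.sum_sub_distrib, hsum_r, ← Finset.sum_mul, hGhat_sum]
      ring
    intro θ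
    have := (Finset.sum_eq_zero_iff_of_nonneg hnn).mp hzero θ (mem_univ θ)
    nlinarith [this]
  have hrhs : ∑ i, (∑ θ, η θ * f (Y i) θ * Ghat θ) / m i = ∑ θ, η θ * (Ghat θ * r θ) := by
    have h1 : ∀ i : Fin n, (∑ θ, η θ * f (Y i) θ * Ghat θ) / m i
        = ∑ θ, η θ * (Ghat θ * (f (Y i) θ / m i)) := by
      intro i
      rw [Finset.sum_div]
      apply Finset.sum_congr rfl; intro θ _
      field_simp
    simp only [h1]
    rw [Finset.sum_comm]
    apply Finset.sum_congr rfl; intro θ _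
    rw [hr, Finset.mul_sum, Finset.mul_sum]
  have hn' : (n:ℝ) ≠ 0 := Nat.cast_ne_zero.mpr hn.ne'
  calc ∑ θ, η θ * Ghat θ
      = (1/n : ℝ) * ∑ θ, η θ * (Ghat θ * n) := by
        rw [Finset.mul_sum]
        apply Finset.sum_congr rfl; intro θ _
        field_simp
    _ = (1/n : ℝ) * ∑ θ, η θ * (Ghat θ * r θ) := by
        congr 1; apply Finset.sum_congr rfl; intro θ _; rw [heach]
    _ = (1/n : ℝ) * ∑ i, (∑ θ, η θ * f (Y i) θ * Ghat θ) / m i := by rw [hrhs]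
end

section
/- For independent Bernoulli observations: let Y_1,...,Y_n ∈ {0,1}, let Ω ⊆ (0,1) be a finite set of parameters, f(1|p) = p, f(0|p) = 1 − p. If Ĝ is a probability measure on Ω maximizing the likelihood Π_i Σ_p f(Y_i|p)Ĝ(p) over all probability measures on Ω, and Ω contains the value m = (Σ_i Y_i)/n with 0 < m < 1, then Σ_p p·Ĝ(p) = (1/n) Σ_i Y_i. -/
open Finset Real

lemma key_lt (k n : ℕ) (hk : 0 < k) (hkn : k < n) (x : ℝ) (hx0 : 0 ≤ x) (hx1 : x ≤ 1)
    (hxm : x ≠ (k:ℝ)/n) :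
    x^k * (1-x)^(n-k) < ((k:ℝ)/n)^k * (1-(k:ℝ)/n)^(n-k) := by
  have hn : 0 < n := hk.trans hkn
  have hnR : (0:ℝ) < n := by exact_mod_cast hn
  have hkR : (0:ℝ) < k := by exact_mod_cast hk
  have hknR : (k:ℝ) < n := by exact_mod_cast hkn
  set m : ℝ := (k:ℝ)/n with hm
  have hm0 : 0 < m := div_pos hkR hnR
  have hm1 : m < 1 := (div_lt_one hnR).mpr hknR
  have hRpos : 0 < m^k * (1-m)^(n-k) :=
    mul_pos (pow_pos hm0 _) (pow_pos (by linarith) _)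
  rcases eq_or_lt_of_le hx0 with h0 | h0
  · rw [← h0, zero_pow hk.ne', zero_mul]; exact hRpos
  rcases eq_or_lt_of_le hx1 with h1 | h1
  · rw [h1, sub_self, zero_pow (by omega), mul_zero]; exact hRpos
  -- now 0 < x < 1
  have hLpos : 0 < x^k * (1-x)^(n-k) :=
    mul_pos (pow_pos h0 _) (pow_pos (by linarith) _)
  rw [← Real.log_lt_log_iff hLpos hRpos] at *
  rw [Real.log_mul (pow_pos h0 _).ne' (pow_pos (by linarith : (0:ℝ) < 1 - x) _).ne',
      Real.log_mul (pow_pos hm0 _).ne' (pow_pos (by linarith : (0:ℝ) < 1 - m) _).ne',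
      Real.log_pow, Real.log_pow, Real.log_pow, Real.log_pow]
  have h2 : Real.log (x/m) < x/m - 1 :=
    Real.log_lt_sub_one_of_pos (by positivity) (by
      intro h; apply hxm; field_simp at h; linarith)
  have h3 : Real.log ((1-x)/(1-m)) < (1-x)/(1-m) - 1 :=
    Real.log_lt_sub_one_of_pos (div_pos (by linarith) (by linarith)) (by
      intro h; apply hxm; rw [div_eq_one_iff_eq (by linarith)] at h; linarith)
  rw [Real.log_div (by linarith) (by linarith)] at h2
  rw [Real.log_div (by linarith) (by linarith)] at h3
  have hkk : (1:ℝ) ≤ (k:ℝ) := by exact_mod_cast hk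
  have hnk : (1:ℝ) ≤ ((n-k:ℕ):ℝ) := by exact_mod_cast Nat.sub_pos_of_lt hkn
  have hcast : ((n-k:ℕ):ℝ) = (n:ℝ) - k := by
    push_cast [Nat.cast_sub hkn.le]; ring
  have key : (k:ℝ) * (x/m - 1) + ((n-k:ℕ):ℝ) * ((1-x)/(1-m) - 1) = 0 := by
    rw [hcast, hm]
    have h1m : (1:ℝ) - (k:ℝ)/n = ((n:ℝ)-k)/n := by field_simp
    rw [h1m]
    have hnk0 : (n:ℝ) - k ≠ 0 := by linarith
    field_simp
    ring
  nlinarith [mul_lt_mul_of_pos_left h2 hkR,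
    mul_lt_mul_of_pos_left h3 (by linarith : (0:ℝ) < ((n-k:ℕ):ℝ))]

/-- for Bernoulli observations, the GMLE mean equals the sample mean,
provided the empirical mean belongs to the (finite) parameter set. -/
theorem stmt_2 (n : ℕ) (hn : 0 < n) (Y : Fin n → Bool)
    (Ω : Finset ℝ) (hΩ : ∀ p ∈ Ω, p ∈ Set.Ioo (0:ℝ) 1)
    (Ghat : ℝ → ℝ) (hG_nonneg : ∀ p ∈ Ω, 0 ≤ Ghat p) (hG_sum : ∑ p ∈ Ω, Ghat p = 1)
    (hmax : ∀ G : ℝ → ℝ, (∀ p ∈ Ω, 0 ≤ G p) → ∑ p ∈ Ω, G p = 1 →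
      ∏ i, ∑ p ∈ Ω, (if Y i then p else 1 - p) * G p ≤
        ∏ i, ∑ p ∈ Ω, (if Y i then p else 1 - p) * Ghat p)
    (hm_mem : ((∑ i, if Y i then (1:ℝ) else 0) / n) ∈ Ω)
    (hm_pos : 0 < (∑ i, if Y i then (1:ℝ) else 0) / n)
    (hm_lt : (∑ i, if Y i then (1:ℝ) else 0) / n < 1) :
    ∑ p ∈ Ω, p * Ghat p = (∑ i, if Y i then (1:ℝ) else 0) / n := by
  have hnR : (0:ℝ) < n := by exact_mod_cast hn
  set S : ℝ := ∑ i, if Y i then (1:ℝ) else 0 with hS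
  set m : ℝ := S / n with hmdef
  set k : ℕ := (univ.filter (fun i => Y i = true)).card with hkdef
  have hSk : S = k := by
    rw [hS, hkdef]; simp [Finset.sum_boole]
  have hkpos : 0 < k := by
    by_contra h
    push_neg at h
    interval_cases k
    rw [hmdef, hSk] at hm_pos; simp at hm_pos
  have hklt : k < n := by
    have : S < n := by
      rw [hmdef] at hm_lt
      exact (div_lt_one hnR).mp hm_lt
    rw [hSk] at this; exact_mod_cast this
  have hmk : m = (k:ℝ)/n := by rw [hmdef, hSk]
  -- per-observation sums
  have hsum : ∀ (G : ℝ → ℝ), (∑ p ∈ Ω, G p = 1) → ∀ i,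
      (∑ p ∈ Ω, (if Y i then p else 1 - p) * G p)
        = if Y i then (∑ p ∈ Ω, p * G p) else 1 - ∑ p ∈ Ω, p * G p := by
    intro G hG1 i
    cases hYi : Y i with
    | true => simp [hYi]
    | false =>
        simp only [hYi, Bool.false_eq_true, if_false]
        have h : ∑ p ∈ Ω, (1-p) * G p = (∑ p ∈ Ω, G p) - ∑ p ∈ Ω, p * G p := by
          rw [← Finset.sum_sub_distrib]
          exact Finset.sum_congr rfl (fun p _ => by ring)
        rw [h, hG1]
  -- product formula
  have hprod : ∀ (G : ℝ → ℝ), (∑ p ∈ Ω, G p = 1) →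
      (∏ i, ∑ p ∈ Ω, (if Y i then p else 1 - p) * G p)
        = (∑ p ∈ Ω, p * G p)^k * (1 - ∑ p ∈ Ω, p * G p)^(n-k) := by
    intro G hG1
    set μ := ∑ p ∈ Ω, p * G p
    calc (∏ i, ∑ p ∈ Ω, (if Y i then p else 1 - p) * G p)
        = ∏ i, (if Y i then μ else 1 - μ) := by
          exact Finset.prod_congr rfl (fun i _ => hsum G hG1 i)
      _ = μ^k * (1-μ)^(n-k) := by
          rw [← Finset.prod_filter_mul_prod_filter_not univ (fun i => Y i = true)]
          have h1 : ∀ i ∈ univ.filter (fun i => Y i = true),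
              (if Y i then μ else 1 - μ) = μ := by
            intro i hi; simp only [Finset.mem_filter] at hi; simp [hi.2]
          have h2 : ∀ i ∈ univ.filter (fun i => ¬ (Y i = true)),
              (if Y i then μ else 1 - μ) = 1 - μ := by
            intro i hi; simp only [Finset.mem_filter] at hi; simp [hi.2]
          have hcard : (univ.filter (fun i : Fin n => ¬ Y i = true)).card = n - k := by
            have := Finset.card_filter_add_card_filter_not
              (s := univ) (p := fun i : Fin n => Y i = true)
            simp only [Finset.card_univ, Fintype.card_fin] at this
            omega
          rw [Finset.prod_congr rfl h1, Finset.prod_congr rfl h2,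
            Finset.prod_const, Finset.prod_const, hcard, ← hkdef]
  -- the point mass at m
  set G0 : ℝ → ℝ := fun p => if p = m then (1:ℝ) else 0 with hG0
  have hG0nonneg : ∀ p ∈ Ω, 0 ≤ G0 p := by intro p _; rw [hG0]; positivity
  have hG0sum : ∑ p ∈ Ω, G0 p = 1 := by
    rw [hG0]; rw [Finset.sum_ite_eq' Ω m (fun _ => (1:ℝ))]; simp [hm_mem]
  have hG0mean : ∑ p ∈ Ω, p * G0 p = m := by
    rw [hG0]
    have : ∀ p ∈ Ω, p * (if p = m then (1:ℝ) else 0) = if p = m then p else 0 := by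
      intro p _; split <;> ring
    rw [Finset.sum_congr rfl this, Finset.sum_ite_eq' Ω m (fun p => p)]
    simp [hm_mem]
  set μ := ∑ p ∈ Ω, p * Ghat p with hμ
  have hineq := hmax G0 hG0nonneg hG0sum
  rw [hprod G0 hG0sum, hprod Ghat hG_sum, hG0mean, ← hμ] at hineq
  -- bounds on μ
  have hμ0 : 0 ≤ μ := Finset.sum_nonneg (fun p hp =>
    mul_nonneg (le_of_lt (hΩ p hp).1) (hG_nonneg p hp))
  have hμ1 : μ ≤ 1 := by
    rw [← hG_sum]
    exact Finset.sum_le_sum (fun p hp => by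
      nlinarith [(hΩ p hp).1, (hΩ p hp).2, hG_nonneg p hp])
  by_contra hne
  have hne' : μ ≠ (k:ℝ)/n := by rw [← hmk]; exact hne
  have := key_lt k n hkpos hklt μ hμ0 hμ1 hne'
  rw [← hmk] at this
  linarith
end

section
/- Identifiability of finite mixtures of two-dimensional Poissons with distinct parameters: let G = Σ_{j=1}^m w_j δ_{(ξ_{1j}, ξ_{2j})} and G' = Σ_{j=1}^{m'} w'_j δ_{(ξ'_{1j}, ξ'_{2j})} be finitely supported probability measures on (0,∞)², each with distinct support points and positive weights, and suppose that for all (a,b) ∈ ℕ², Σ_j w_j e^{−ξ_{1j}−ξ_{2j}} ξ_{1j}^a ξ_{2j}^b /(a! b!) = Σ_j w'_j e^{−ξ'_{1j}−ξ'_{2j}} (ξ'_{1j})^a (ξ'_{2j})^b /(a! b!). Then G = G'. -/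
open Finset MeasureTheory

open Matrix in
-- base Vandermonde lemma
lemma vdm {k : ℕ} (t : Fin k → ℝ) (ht : Function.Injective t) (c : Fin k → ℝ)
    (h : ∀ a : ℕ, ∑ i, c i * t i ^ a = 0) : ∀ i, c i = 0 := by
  set A : Matrix (Fin k) (Fin k) ℝ := (Matrix.vandermonde t)ᵀ with hA
  have hdet : IsUnit A.det := by
    rw [Matrix.det_transpose, Matrix.det_vandermonde]
    refine (Finset.prod_ne_zero_iff.mpr ?_).isUnit
    intro i _
    refine Finset.prod_ne_zero_iff.mpr ?_
    intro j hj
    exact sub_ne_zero.mpr fun e => (ne_of_lt (Finset.mem_Ioi.mp hj)) (ht e).symm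
  have hmv : A.mulVec c = 0 := by
    funext a
    simpa [hA, Matrix.mulVec, Matrix.vandermonde, dotProduct, mul_comm] using h a
  have : c = 0 := by
    have h1 : A⁻¹ * A = 1 := Matrix.nonsing_inv_mul A hdet
    calc c = (A⁻¹ * A).mulVec c := by rw [h1, Matrix.one_mulVec]
      _ = A⁻¹.mulVec (A.mulVec c) := by rw [← Matrix.mulVec_mulVec]
      _ = 0 := by rw [hmv, Matrix.mulVec_zero]
  intro i; rw [this]; rfl

-- 1D fiber lemma over a Finset
lemma fiber1 {ι : Type*} [DecidableEq ι] (s : Finset ι) (Q : ι → ℝ) (v : ι → ℝ)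
    (h : ∀ a : ℕ, ∑ j ∈ s, v j * Q j ^ a = 0) (x : ℝ) :
    ∑ j ∈ s.filter (fun j => Q j = x), v j = 0 := by
  classical
  set X : Finset ℝ := s.image Q with hX
  set k := X.card with hk
  set e := X.orderIsoOfFin rfl with he
  set t : Fin k → ℝ := fun i => (e i : ℝ) with ht
  have htinj : Function.Injective t := fun i j hij => e.injective (Subtype.ext hij)
  set c : Fin k → ℝ := fun i => ∑ j ∈ s.filter (fun j => Q j = t i), v j with hc
  have hsum : ∀ y ∈ X, ∀ a : ℕ, ∑ j ∈ s.filter (fun j => Q j = y), v j * Q j ^ a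
      = (∑ j ∈ s.filter (fun j => Q j = y), v j) * y ^ a := by
    intro y _ a
    rw [Finset.sum_mul]
    refine Finset.sum_congr rfl fun j hj => ?_
    rw [(Finset.mem_filter.mp hj).2]
  have hzero : ∀ a : ℕ, ∑ i, c i * t i ^ a = 0 := by
    intro a
    have h1 : ∑ i, c i * t i ^ a
        = ∑ y ∈ X, (∑ j ∈ s.filter (fun j => Q j = y), v j) * y ^ a := by
      rw [← Finset.sum_attach X (fun y => (∑ j ∈ s.filter (fun j => Q j = y), v j) * y ^ a)]
      exact Fintype.sum_equiv e.toEquiv _ _ (fun i => rfl)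
    rw [h1, ← h a, ← Finset.sum_fiberwise_of_maps_to (g := Q) (fun j hj => Finset.mem_image_of_mem Q hj)
      (fun j => v j * Q j ^ a)]
    exact Finset.sum_congr rfl fun y hy => (hsum y hy a).symm
  have hc0 := vdm t htinj c hzero
  by_cases hx : x ∈ X
  · obtain ⟨i, hi⟩ := e.surjective ⟨x, hx⟩
    have : t i = x := by rw [ht]; exact congrArg Subtype.val hi
    rw [← this]; exact hc0 i
  · have : s.filter (fun j => Q j = x) = ∅ := by
      refine Finset.filter_eq_empty_iff.mpr fun {j} hj hQ => hx ?_
      rw [← hQ]; exact Finset.mem_image_of_mem Q hj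
    rw [this, Finset.sum_empty]

-- 2D fiber lemma
lemma fiber2 {n : ℕ} (P : Fin n → ℝ × ℝ) (v : Fin n → ℝ)
    (h : ∀ a b : ℕ, ∑ j, v j * (P j).1 ^ a * (P j).2 ^ b = 0) (p : ℝ × ℝ) :
    ∑ j ∈ Finset.univ.filter (fun j => P j = p), v j = 0 := by
  classical
  have step1 : ∀ b : ℕ, ∀ x : ℝ,
      ∑ j ∈ Finset.univ.filter (fun j => (P j).1 = x), v j * (P j).2 ^ b = 0 := by
    intro b x
    exact fiber1 Finset.univ (fun j => (P j).1) (fun j => v j * (P j).2 ^ b)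
      (fun a => by rw [← h a b]; exact Finset.sum_congr rfl fun j _ => by ring) x
  have step2 : ∑ j ∈ (Finset.univ.filter (fun j => (P j).1 = p.1)).filter
      (fun j => (P j).2 = p.2), v j = 0 :=
    fiber1 _ (fun j => (P j).2) v (fun b => step1 b p.1) p.2
  rw [Finset.filter_filter] at step2
  rw [← step2]
  refine Finset.sum_congr (Finset.filter_congr fun j _ => ?_) fun _ _ => rfl
  constructor
  · intro hj; rw [hj]; exact ⟨rfl, rfl⟩
  · intro ⟨h1, h2⟩; exact Prod.ext h1 h2


/-- identifiability of finite mixtures of two-dimensional Poissons. -/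
theorem stmt_7 (m m' : ℕ)
    (w : Fin m → ℝ) (ξ : Fin m → ℝ × ℝ)
    (w' : Fin m' → ℝ) (ξ' : Fin m' → ℝ × ℝ)
    (hw : ∀ j, 0 < w j) (hw' : ∀ j, 0 < w' j)
    (hwsum : ∑ j, w j = 1) (hw'sum : ∑ j, w' j = 1)
    (hξ : ∀ j, 0 < (ξ j).1 ∧ 0 < (ξ j).2) (hξ' : ∀ j, 0 < (ξ' j).1 ∧ 0 < (ξ' j).2)
    (hinj : Function.Injective ξ) (hinj' : Function.Injective ξ')
    (hmix : ∀ a b : ℕ,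
      ∑ j, w j * Real.exp (-(ξ j).1 - (ξ j).2) * (ξ j).1 ^ a * (ξ j).2 ^ b /
        (Nat.factorial a * Nat.factorial b) =
      ∑ j, w' j * Real.exp (-(ξ' j).1 - (ξ' j).2) * (ξ' j).1 ^ a * (ξ' j).2 ^ b /
        (Nat.factorial a * Nat.factorial b)) :
    (∑ j, (ENNReal.ofReal (w j)) • Measure.dirac (ξ j)) =
      (∑ j, (ENNReal.ofReal (w' j)) • Measure.dirac (ξ' j)) := by
  classical
  -- clear factorials
  have hmix' : ∀ a b : ℕ,
      ∑ j, w j * Real.exp (-(ξ j).1 - (ξ j).2) * (ξ j).1 ^ a * (ξ j).2 ^ b =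
      ∑ j, w' j * Real.exp (-(ξ' j).1 - (ξ' j).2) * (ξ' j).1 ^ a * (ξ' j).2 ^ b := by
    intro a b
    have hK : ((Nat.factorial a : ℝ) * (Nat.factorial b : ℝ)) ≠ 0 := by
      positivity
    have h := hmix a b
    rw [← Finset.sum_div, ← Finset.sum_div] at h
    have h2 := congrArg (fun z => z * ((Nat.factorial a : ℝ) * (Nat.factorial b : ℝ))) h
    simpa only [div_mul_cancel₀ _ hK] using h2
  -- combined family
  set P : Fin (m + m') → ℝ × ℝ := Fin.append ξ ξ' with hP
  set v : Fin (m + m') → ℝ :=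
    Fin.append (fun j => w j * Real.exp (-(ξ j).1 - (ξ j).2))
      (fun j => -(w' j * Real.exp (-(ξ' j).1 - (ξ' j).2))) with hv
  have hcomb : ∀ a b : ℕ, ∑ j, v j * (P j).1 ^ a * (P j).2 ^ b = 0 := by
    intro a b
    rw [Fin.sum_univ_add]
    simp only [hP, hv, Fin.append_left, Fin.append_right]
    have := hmix' a b
    have e1 : ∀ j : Fin m', -(w' j * Real.exp (-(ξ' j).1 - (ξ' j).2)) * (ξ' j).1 ^ a * (ξ' j).2 ^ b
        = -(w' j * Real.exp (-(ξ' j).1 - (ξ' j).2) * (ξ' j).1 ^ a * (ξ' j).2 ^ b) := fun j => by ring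
    rw [Finset.sum_congr rfl fun j _ => e1 j, Finset.sum_neg_distrib]
    linarith [hmix' a b]
  -- per-point weight equality
  have KEY : ∀ p : ℝ × ℝ,
      (∑ j, if ξ j = p then w j else 0) = ∑ j, if ξ' j = p then w' j else 0 := by
    intro p
    have h0 := fiber2 P v hcomb p
    rw [Finset.sum_filter, Fin.sum_univ_add] at h0
    simp only [hP, hv, Fin.append_left, Fin.append_right] at h0
    have E := Real.exp_ne_zero (-p.1 - p.2)
    have e1 : ∀ j : Fin m, (if ξ j = p then w j * Real.exp (-(ξ j).1 - (ξ j).2) else 0)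
        = (if ξ j = p then w j else 0) * Real.exp (-p.1 - p.2) := by
      intro j; split_ifs with hj
      · rw [hj]
      · rw [zero_mul]
    have e2 : ∀ j : Fin m', (if ξ' j = p then -(w' j * Real.exp (-(ξ' j).1 - (ξ' j).2)) else 0)
        = -((if ξ' j = p then w' j else 0) * Real.exp (-p.1 - p.2)) := by
      intro j; split_ifs with hj
      · rw [hj]
      · rw [zero_mul, neg_zero]
    rw [Finset.sum_congr rfl fun j _ => e1 j, Finset.sum_congr rfl fun j _ => e2 j,
      Finset.sum_neg_distrib, ← Finset.sum_mul, ← Finset.sum_mul] at h0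
    have := sub_eq_zero.mp (by linarith : (∑ j, if ξ j = p then w j else 0) * Real.exp (-p.1 - p.2)
      - (∑ j, if ξ' j = p then w' j else 0) * Real.exp (-p.1 - p.2) = 0)
    exact mul_right_cancel₀ E this
  -- single-term sums
  have hWl : ∀ j0 : Fin m, (∑ j, if ξ j = ξ j0 then w j else 0) = w j0 := by
    intro j0
    rw [Finset.sum_eq_single j0 (fun j _ hne => if_neg fun hc => hne (hinj hc))
      (fun h => absurd (Finset.mem_univ j0) h)]
    exact if_pos rfl
  have hWr : ∀ j0 : Fin m', (∑ j, if ξ' j = ξ' j0 then w' j else 0) = w' j0 := by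
    intro j0
    rw [Finset.sum_eq_single j0 (fun j _ hne => if_neg fun hc => hne (hinj' hc))
      (fun h => absurd (Finset.mem_univ j0) h)]
    exact if_pos rfl
  -- matching maps
  have hex : ∀ j0 : Fin m, ∃ j' : Fin m', ξ' j' = ξ j0 ∧ w' j' = w j0 := by
    intro j0
    have h1 : (∑ j, if ξ' j = ξ j0 then w' j else 0) = w j0 := by
      rw [← KEY (ξ j0), hWl j0]
    by_contra hcon
    push_neg at hcon
    have : (∑ j, if ξ' j = ξ j0 then w' j else 0) = 0 := by
      refine Finset.sum_eq_zero fun j _ => ?_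
      by_cases hj : ξ' j = ξ j0
      · exfalso
        have h2 : (∑ i, if ξ' i = ξ' j then w' i else 0) = w j0 := by
          rw [hj]; exact h1
        rw [hWr j] at h2
        exact hcon j hj h2
      · exact if_neg hj
    rw [this] at h1
    exact (hw j0).ne' h1.symm
  have hex' : ∀ j0 : Fin m', ∃ j : Fin m, ξ j = ξ' j0 := by
    intro j0
    have h1 : (∑ j, if ξ j = ξ' j0 then w j else 0) = w' j0 := by
      rw [KEY (ξ' j0), hWr j0]
    by_contra hcon
    push_neg at hcon
    have : (∑ j, if ξ j = ξ' j0 then w j else 0) = 0 :=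
      Finset.sum_eq_zero fun j _ => if_neg (hcon j)
    rw [this] at h1
    exact (hw' j0).ne' h1.symm
  choose f hf1 hf2 using hex
  choose g hg using hex'
  have hfinj : Function.Injective f := fun j1 j2 hh => by
    apply hinj
    rw [← hf1 j1, ← hf1 j2, hh]
  have hginj : Function.Injective g := fun j1 j2 hh => by
    apply hinj'
    rw [← hg j1, ← hg j2, hh]
  have hcard : m = m' := le_antisymm
    (by simpa using Fintype.card_le_of_injective f hfinj)
    (by simpa using Fintype.card_le_of_injective g hginj)
  have hbij : Function.Bijective f :=
    (Fintype.bijective_iff_injective_and_card f).mpr ⟨hfinj, by simpa using hcard⟩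
  exact Fintype.sum_bijective f hbij
    (fun j => ENNReal.ofReal (w j) • Measure.dirac (ξ j))
    (fun j' => ENNReal.ofReal (w' j') • Measure.dirac (ξ' j'))
    (fun j => by
      show ENNReal.ofReal (w j) • Measure.dirac (ξ j)
        = ENNReal.ofReal (w' (f j)) • Measure.dirac (ξ' (f j))
      rw [hf1 j, hf2 j])
end

section
/- Sampling-without-replacement 4th-moment comparison: let a_1,...,a_n be real numbers, and for k ≤ n let S^{with} = Σ_{i=1}^k a_{I_i} where I_1,...,I_k are iid uniform on {1,...,n}, and S^{without} = Σ_{i=1}^k a_{J_i} where (J_1,...,J_k) is a uniformly random k-tuple of distinct indices. If Σ_i a_i = 0 (centered), then E[(S^{without})^4] ≤ E[(S^{with})^4]. -/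
open Finset

namespace Stmt9

variable {k n : ℕ} {α β : Type*}

section Patt

variable [DecidableEq α] [DecidableEq β]

/-- index of first occurrence of the value `f i`. -/
def fo (f : Fin k → α) (i : Fin k) : Fin k :=
  (univ.filter fun j => f j = f i).min' ⟨i, by simp⟩

lemma fo_apply (f : Fin k → α) (i : Fin k) : f (fo f i) = f i := by
  have h := Finset.min'_mem (univ.filter fun j => f j = f i) ⟨i, by simp⟩
  simpa [fo] using (Finset.mem_filter.mp h).2

lemma fo_le (f : Fin k → α) {i j : Fin k} (h : f j = f i) : fo f i ≤ j :=
  Finset.min'_le _ _ (by simp [h])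

lemma fo_congr (f : Fin k → α) {i j : Fin k} (h : f i = f j) : fo f i = fo f j := by
  unfold fo; congr 1; ext x; simp [h]

/-- the "pattern" of `f` : position `i` is sent to the number of distinct values
occurring strictly before the first occurrence of `f i`. -/
def patt (f : Fin k → α) (i : Fin k) : Fin k :=
  ⟨((univ.filter fun j => j < fo f i).image f).card, by
    refine lt_of_le_of_lt Finset.card_image_le ?_
    have hss : (univ.filter fun j => j < fo f i) ⊂ univ := by
      refine Finset.ssubset_univ_iff.mpr fun h => ?_
      have : fo f i ∈ univ.filter fun j => j < fo f i := by
        rw [h]; exact Finset.mem_univ _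
      simp at this
    simpa using Finset.card_lt_card hss⟩

lemma patt_lt_of_fo_lt {f : Fin k → α} {i j : Fin k} (h : fo f i < fo f j) :
    patt f i < patt f j := by
  have hsub : ((univ.filter fun x => x < fo f i).image f) ⊆
      ((univ.filter fun x => x < fo f j).image f) :=
    Finset.image_subset_image (by
      intro x hx
      simp only [Finset.mem_filter, Finset.mem_univ, true_and] at hx ⊢
      exact lt_trans hx h)
  have hmem : f (fo f i) ∈ (univ.filter fun x => x < fo f j).image f :=
    Finset.mem_image_of_mem _ (by simp [h])
  have hnot : f (fo f i) ∉ (univ.filter fun x => x < fo f i).image f := by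
    intro hmem'
    obtain ⟨x, hx, hfx⟩ := Finset.mem_image.mp hmem'
    simp only [Finset.mem_filter, Finset.mem_univ, true_and] at hx
    have : fo f i ≤ x := fo_le f (hfx.trans (fo_apply f i))
    exact absurd hx (not_lt.mpr this)
  have hss := (Finset.ssubset_iff_of_subset hsub).mpr ⟨f (fo f i), hmem, hnot⟩
  exact Fin.mk_lt_mk.mpr (Finset.card_lt_card hss)

lemma patt_eq_iff_apply {f : Fin k → α} {i j : Fin k} :
    patt f i = patt f j ↔ f i = f j := by
  constructor
  · intro h
    by_contra hne
    rcases lt_trichotomy (fo f i) (fo f j) with hlt | heq | hgt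
    · exact absurd h (patt_lt_of_fo_lt hlt).ne
    · exact hne (((fo_apply f i).symm.trans (congrArg f heq)).trans (fo_apply f j))
    · exact absurd h.symm (patt_lt_of_fo_lt hgt).ne
  · intro h
    have hfo : fo f i = fo f j := fo_congr f h
    simp [patt, hfo]

lemma card_image_coincide {f : Fin k → α} {g : Fin k → β}
    (h : ∀ i j, f i = f j ↔ g i = g j) (s : Finset (Fin k)) :
    (s.image f).card = (s.image g).card := by
  refine Finset.card_bij (fun v hv => g (Finset.mem_image.mp hv).choose) ?_ ?_ ?_
  · intro v hv
    exact Finset.mem_image_of_mem _ (Finset.mem_image.mp hv).choose_spec.1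
  · intro v1 hv1 v2 hv2 heq
    have s1 := (Finset.mem_image.mp hv1).choose_spec
    have s2 := (Finset.mem_image.mp hv2).choose_spec
    rw [← s1.2, ← s2.2]
    exact (h _ _).mpr heq
  · intro b hb
    obtain ⟨x, hx, rfl⟩ := Finset.mem_image.mp hb
    refine ⟨f x, Finset.mem_image_of_mem _ hx, ?_⟩
    have s1 := (Finset.mem_image.mp (Finset.mem_image_of_mem f hx)).choose_spec
    exact (h _ _).mp s1.2

lemma patt_congr {f : Fin k → α} {g : Fin k → β}
    (h : ∀ i j, f i = f j ↔ g i = g j) : patt f = patt g := by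
  funext i
  have hfo : fo f i = fo g i := by
    unfold fo; congr 1; ext x; simp [h x i]
  apply Fin.ext
  simp only [patt]
  rw [hfo]
  exact card_image_coincide h _

lemma patt_patt (f : Fin k → α) : patt (patt f) = patt f :=
  patt_congr fun _ _ => patt_eq_iff_apply

lemma patt_comp {J : α → β} (hJ : Function.Injective J) (f : Fin k → α) :
    patt (J ∘ f) = patt f :=
  patt_congr fun i j => by simp [Function.comp, hJ.eq_iff]

lemma patt_eq_patt_iff {f : Fin k → α} {g : Fin k → β} :
    patt f = patt g ↔ ∀ i j, f i = f j ↔ g i = g j := by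
  constructor
  · intro h i j
    rw [← patt_eq_iff_apply (f := f), h, patt_eq_iff_apply]
  · exact patt_congr

end Patt

section Counting

lemma desc_split {n k : ℕ} : ∀ {r : ℕ}, r ≤ k →
    n.descFactorial k = n.descFactorial r * (n - r).descFactorial (k - r)
  | 0, _ => by simp
  | (r+1), h => by
    have hr : r ≤ k := (Nat.lt_of_succ_le h).le
    have IH := desc_split (n := n) (k := k) hr
    rw [IH]
    have h1 : k - r = (k - (r+1)) + 1 := by omega
    rcases Nat.eq_zero_or_pos (n - r) with h0 | hpos
    · have h2 : n - (r + 1) = 0 := by omega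
      rw [h1, h0, h2, Nat.zero_descFactorial_succ, Nat.descFactorial_succ, h0]
      simp
    · obtain ⟨m, hm⟩ : ∃ m, n - r = m + 1 := ⟨n - r - 1, by omega⟩
      have h2 : n - (r+1) = m := by omega
      rw [h1, hm, Nat.succ_descFactorial_succ, Nat.descFactorial_succ, h2, ← hm]
      ring

variable {k n : ℕ}

/-- functions with the same pattern as `I` correspond to embeddings of the
pattern values into `Fin n`. -/
noncomputable def equivA (I : Fin k → Fin n) :
    {I' : Fin k → Fin n // patt I' = patt I} ≃ ((↥(univ.image (patt I))) ↪ Fin n) where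
  toFun := fun ⟨I', hI'⟩ =>
    ⟨fun t => I' (Finset.mem_image.mp t.2).choose, by
      rintro ⟨t1, ht1⟩ ⟨t2, ht2⟩ heq
      have s1 := (Finset.mem_image.mp (show t1 ∈ univ.image (patt I) from ht1)).choose_spec
      have s2 := (Finset.mem_image.mp (show t2 ∈ univ.image (patt I) from ht2)).choose_spec
      have hco := patt_eq_patt_iff.mp hI'
      have hI : I _ = I _ := (hco _ _).mp heq
      have hp : patt I (Finset.mem_image.mp (show t1 ∈ univ.image (patt I) from ht1)).choose
          = patt I (Finset.mem_image.mp (show t2 ∈ univ.image (patt I) from ht2)).choose :=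
        patt_eq_iff_apply.mpr hI
      apply Subtype.ext
      show t1 = t2
      rw [← s1.2, ← s2.2, hp]⟩
  invFun := fun g =>
    ⟨fun x => g ⟨patt I x, Finset.mem_image_of_mem _ (Finset.mem_univ x)⟩, by
      apply patt_congr
      intro i j
      constructor
      · intro h
        have := g.injective h
        exact patt_eq_iff_apply.mp (congrArg Subtype.val this)
      · intro h
        have hp : patt I i = patt I j := patt_eq_iff_apply.mpr h
        exact congrArg g (Subtype.ext hp)⟩
  left_inv := by
    rintro ⟨I', hI'⟩
    apply Subtype.ext
    funext x
    simp only
    have s1 := (Finset.mem_image.mp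
      (Finset.mem_image_of_mem (patt I) (Finset.mem_univ x))).choose_spec
    have hco := patt_eq_patt_iff.mp hI'
    exact (hco _ _).mpr (patt_eq_iff_apply.mp s1.2)
  right_inv := by
    intro g
    apply DFunLike.ext
    rintro ⟨t, ht⟩
    simp only
    have s1 := (Finset.mem_image.mp (show t ∈ univ.image (patt I) from ht)).choose_spec
    exact congrArg g (Subtype.ext s1.2)

/-- extension of an embedding on the complement of the pattern range. -/
noncomputable def extFun (I : Fin k → Fin n)
    (e : {x : Fin k // x ∉ univ.image (patt I)} ↪ {v : Fin n // v ∉ univ.image I}) :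
    Fin k → Fin n := fun x =>
  if h : x ∈ univ.image (patt I) then I (Finset.mem_image.mp h).choose else (e ⟨x, h⟩).1

lemma extFun_comp (I : Fin k → Fin n)
    (e : {x : Fin k // x ∉ univ.image (patt I)} ↪ {v : Fin n // v ∉ univ.image I}) :
    extFun I e ∘ patt I = I := by
  funext i
  have hmem : patt I i ∈ univ.image (patt I) :=
    Finset.mem_image_of_mem _ (Finset.mem_univ i)
  have s1 := (Finset.mem_image.mp hmem).choose_spec
  simp only [Function.comp, extFun, dif_pos hmem]
  exact patt_eq_iff_apply.mp s1.2

lemma extFun_inj (I : Fin k → Fin n)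
    (e : {x : Fin k // x ∉ univ.image (patt I)} ↪ {v : Fin n // v ∉ univ.image I}) :
    Function.Injective (extFun I e) := by
  intro x1 x2 heq
  by_cases h1 : x1 ∈ univ.image (patt I) <;> by_cases h2 : x2 ∈ univ.image (patt I)
  · have s1 := (Finset.mem_image.mp h1).choose_spec
    have s2 := (Finset.mem_image.mp h2).choose_spec
    rw [extFun, dif_pos h1, extFun, dif_pos h2] at heq
    have hp : patt I _ = patt I _ := patt_eq_iff_apply.mpr heq
    rw [s1.2, s2.2] at hp
    exact hp
  · exfalso
    rw [extFun, dif_pos h1, extFun, dif_neg h2] at heq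
    exact (e ⟨x2, h2⟩).2 (heq ▸ Finset.mem_image_of_mem I
      (Finset.mem_univ (Finset.mem_image.mp h1).choose))
  · exfalso
    rw [extFun, dif_neg h1, extFun, dif_pos h2] at heq
    exact (e ⟨x1, h1⟩).2 (heq.symm ▸ Finset.mem_image_of_mem I
      (Finset.mem_univ (Finset.mem_image.mp h2).choose))
  · rw [extFun, dif_neg h1, extFun, dif_neg h2] at heq
    have := e.injective (Subtype.ext heq)
    exact congrArg Subtype.val this

/-- injections `J` with `J ∘ patt I = I` correspond to embeddings of the
complement of the pattern range into the complement of the range of `I`. -/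
noncomputable def equivB (I : Fin k → Fin n) :
    {J : Fin k → Fin n // Function.Injective J ∧ J ∘ patt I = I} ≃
      ({x : Fin k // x ∉ univ.image (patt I)} ↪ {v : Fin n // v ∉ univ.image I}) where
  toFun := fun ⟨J, hinj, hcomp⟩ =>
    ⟨fun x => ⟨J x.1, fun hmem => by
        obtain ⟨i, _, hi⟩ := Finset.mem_image.mp hmem
        have h1 : J (patt I i) = J x.1 := by
          have hc := congrFun hcomp i
          simp only [Function.comp] at hc
          rw [hc, hi]
        exact x.2 ((hinj h1) ▸ Finset.mem_image_of_mem (patt I) (Finset.mem_univ i))⟩,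
      fun x1 x2 h => Subtype.ext (hinj (congrArg Subtype.val h))⟩
  invFun := fun e => ⟨extFun I e, extFun_inj I e, extFun_comp I e⟩
  left_inv := by
    rintro ⟨J, hinj, hcomp⟩
    apply Subtype.ext
    funext x
    by_cases h : x ∈ univ.image (patt I)
    · have s1 := (Finset.mem_image.mp h).choose_spec
      show extFun I _ x = J x
      rw [extFun, dif_pos h]
      have hc := congrFun hcomp (Finset.mem_image.mp h).choose
      simp only [Function.comp] at hc
      rw [← hc, s1.2]
    · show extFun I _ x = J x
      rw [extFun, dif_neg h]
      rfl
  right_inv := by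
    intro e
    apply DFunLike.ext
    rintro ⟨x, hx⟩
    apply Subtype.ext
    show extFun I e x = _
    rw [extFun, dif_neg hx]

lemma card_filter_patt_eq (I : Fin k → Fin n) :
    (univ.filter fun I' : Fin k → Fin n => patt I' = patt I).card
      = n.descFactorial ((univ.image (patt I)).card) := by
  rw [← Fintype.card_subtype, Fintype.card_congr (equivA I), Fintype.card_embedding_eq,
    Fintype.card_coe, Fintype.card_fin]

lemma card_filter_ext (I : Fin k → Fin n) :
    (univ.filter fun J : Fin k → Fin n => Function.Injective J ∧ J ∘ patt I = I).card
      = (n - (univ.image I).card).descFactorial (k - (univ.image (patt I)).card) := by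
  rw [← Fintype.card_subtype, Fintype.card_congr (equivB I), Fintype.card_embedding_eq]
  congr 1
  · rw [Fintype.card_subtype_compl, Fintype.card_fin]
    congr 1
    exact Fintype.card_coe _
  · rw [Fintype.card_subtype_compl, Fintype.card_fin]
    congr 1
    exact Fintype.card_coe _

lemma card_inj_eq :
    (univ.filter fun J : Fin k → Fin n => Function.Injective J).card = n.descFactorial k := by
  rw [← Fintype.card_subtype,
    Fintype.card_congr (Equiv.subtypeInjectiveEquivEmbedding (Fin k) (Fin n)),
    Fintype.card_embedding_eq]
  simp

lemma fiber_card (I : Fin k → Fin n) :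
    (((univ : Finset (Fin k → Fin n)) ×ˢ
        (univ.filter fun J : Fin k → Fin n => Function.Injective J)).filter
      (fun p => p.2 ∘ patt p.1 = I)).card = n.descFactorial k := by
  have himg : (univ.image I).card = (univ.image (patt I)).card :=
    card_image_coincide (fun i j => patt_eq_iff_apply.symm) univ
  have hfib : (((univ : Finset (Fin k → Fin n)) ×ˢ
        (univ.filter fun J : Fin k → Fin n => Function.Injective J)).filter
      (fun p => p.2 ∘ patt p.1 = I))
      = (univ.filter fun I' : Fin k → Fin n => patt I' = patt I) ×ˢ
        (univ.filter fun J : Fin k → Fin n => Function.Injective J ∧ J ∘ patt I = I) := by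
    ext ⟨I', J⟩
    simp only [Finset.mem_filter, Finset.mem_product, Finset.mem_univ, true_and]
    constructor
    · rintro ⟨hJ, hcomp⟩
      have h1 : patt I = patt I' := by
        rw [← hcomp, patt_comp hJ, patt_patt]
      refine ⟨h1.symm, hJ, ?_⟩
      rw [h1]
      exact hcomp
    · rintro ⟨hpatt, hJ, hcomp⟩
      refine ⟨hJ, ?_⟩
      rw [hpatt]
      exact hcomp
  have hr : (univ.image (patt I)).card ≤ k := le_trans Finset.card_image_le (by simp)
  rw [hfib, Finset.card_product, card_filter_patt_eq, card_filter_ext, himg]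
  exact (desc_split hr).symm

lemma diamond (F : (Fin k → Fin n) → ℝ) :
    (∑ I' : Fin k → Fin n, ∑ J ∈ univ.filter (fun J : Fin k → Fin n => Function.Injective J),
      F (J ∘ patt I'))
    = (n.descFactorial k : ℝ) * ∑ I : Fin k → Fin n, F I := by
  classical
  have h0 : (∑ I' : Fin k → Fin n,
        ∑ J ∈ univ.filter (fun J : Fin k → Fin n => Function.Injective J), F (J ∘ patt I'))
      = ∑ p ∈ (univ : Finset (Fin k → Fin n)) ×ˢ
          (univ.filter fun J : Fin k → Fin n => Function.Injective J),
          F (p.2 ∘ patt p.1) := by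
    rw [Finset.sum_product]
  rw [h0, ← Finset.sum_fiberwise_of_maps_to'
    (g := fun p : (Fin k → Fin n) × (Fin k → Fin n) => p.2 ∘ patt p.1)
    (t := (univ : Finset (Fin k → Fin n))) (fun p _ => Finset.mem_univ _) F]
  rw [Finset.mul_sum]
  refine Finset.sum_congr rfl fun I _ => ?_
  rw [Finset.sum_const, fiber_card I, nsmul_eq_mul]

end Counting

section Main

lemma pow4_jensen {γ : Type*} (s : Finset γ) (f : γ → ℝ) :
    (∑ i ∈ s, f i) ^ 4 ≤ (s.card : ℝ) ^ 3 * ∑ i ∈ s, f i ^ 4 := by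
  have h1 := sq_sum_le_card_mul_sum_sq (s := s) (f := f)
  have h2 := sq_sum_le_card_mul_sum_sq (s := s) (f := fun i => f i ^ 2)
  have h3 : ∑ i ∈ s, (f i ^ 2) ^ 2 = ∑ i ∈ s, f i ^ 4 := by
    refine Finset.sum_congr rfl fun i _ => by ring
  rw [h3] at h2
  have hc : (0 : ℝ) ≤ (s.card : ℝ) := Nat.cast_nonneg _
  calc (∑ i ∈ s, f i) ^ 4 = ((∑ i ∈ s, f i) ^ 2) ^ 2 := by ring
    _ ≤ ((s.card : ℝ) * ∑ i ∈ s, f i ^ 2) ^ 2 := pow_le_pow_left₀ (sq_nonneg _) h1 2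
    _ = (s.card : ℝ) ^ 2 * (∑ i ∈ s, f i ^ 2) ^ 2 := by ring
    _ ≤ (s.card : ℝ) ^ 2 * ((s.card : ℝ) * ∑ i ∈ s, f i ^ 4) := by
        exact mul_le_mul_of_nonneg_left h2 (by positivity)
    _ = (s.card : ℝ) ^ 3 * ∑ i ∈ s, f i ^ 4 := by ring

lemma star {m n : ℕ} (a : Fin n → ℝ) (σ : Fin (m + 1) → Fin (m + 1)) :
    (∑ J ∈ univ.filter (fun J : Fin (m + 1) → Fin n => Function.Injective J),
        (∑ i, a (J i)) ^ 4)
    ≤ ∑ J ∈ univ.filter (fun J : Fin (m + 1) → Fin n => Function.Injective J),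
        (∑ i, a (J (σ i))) ^ 4 := by
  classical
  set Inj := univ.filter (fun J : Fin (m + 1) → Fin n => Function.Injective J) with hInj
  have jensen : ∀ J : Fin (m + 1) → Fin n,
      ((m : ℝ) + 1) * (∑ i, a (J i)) ^ 4 ≤ ∑ c : Fin (m + 1), (∑ i, a (J (σ i + c))) ^ 4 := by
    intro J
    have hS : (∑ c : Fin (m + 1), ∑ i, a (J (σ i + c))) = ((m : ℝ) + 1) * ∑ i, a (J i) := by
      rw [Finset.sum_comm]
      have hinner : ∀ i : Fin (m + 1), (∑ c : Fin (m + 1), a (J (σ i + c))) = ∑ t, a (J t) :=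
        fun i => Fintype.sum_equiv (Equiv.addLeft (σ i)) _ _ (fun c => rfl)
      rw [Finset.sum_congr rfl (fun i _ => hinner i), Finset.sum_const]
      simp only [Finset.card_univ, Fintype.card_fin, nsmul_eq_mul]
      push_cast
      ring
    have hp4 := pow4_jensen (univ : Finset (Fin (m + 1))) (fun c => ∑ i, a (J (σ i + c)))
    rw [hS] at hp4
    have hcard : (((univ : Finset (Fin (m + 1))).card : ℝ)) = (m : ℝ) + 1 := by
      simp only [Finset.card_univ, Fintype.card_fin]
      push_cast
      ring
    rw [hcard] at hp4
    have hm : (0 : ℝ) < ((m : ℝ) + 1) ^ 3 := by positivity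
    refine le_of_mul_le_mul_left ?_ hm
    calc ((m : ℝ) + 1) ^ 3 * (((m : ℝ) + 1) * (∑ i, a (J i)) ^ 4)
        = (((m : ℝ) + 1) * ∑ i, a (J i)) ^ 4 := by ring
      _ ≤ ((m : ℝ) + 1) ^ 3 * ∑ c : Fin (m + 1), (∑ i, a (J (σ i + c))) ^ 4 := hp4
  have h2 : ∀ c : Fin (m + 1),
      (∑ J ∈ Inj, (∑ i, a (J (σ i + c))) ^ 4) = ∑ J ∈ Inj, (∑ i, a (J (σ i))) ^ 4 := by
    intro c
    refine Finset.sum_nbij' (i := fun J => fun x : Fin (m + 1) => J (x + c))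
      (j := fun J => fun x : Fin (m + 1) => J (x - c)) ?_ ?_ ?_ ?_ ?_
    · intro J hJ
      simp only [hInj, Finset.mem_filter, Finset.mem_univ, true_and] at hJ ⊢
      intro x y hxy
      have h := hJ hxy
      have := congrArg (fun z : Fin (m + 1) => z - c) h
      simpa using this
    · intro J hJ
      simp only [hInj, Finset.mem_filter, Finset.mem_univ, true_and] at hJ ⊢
      intro x y hxy
      have h := hJ hxy
      have := congrArg (fun z : Fin (m + 1) => z + c) h
      simpa using this
    · intro J _
      funext x
      simp
    · intro J _
      funext x
      simp
    · intro J _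
      rfl
  calc (∑ J ∈ Inj, (∑ i, a (J i)) ^ 4)
      = (((m : ℝ) + 1) * ∑ J ∈ Inj, (∑ i, a (J i)) ^ 4) / ((m : ℝ) + 1) := by
        field_simp
    _ ≤ (∑ J ∈ Inj, ∑ c : Fin (m + 1), (∑ i, a (J (σ i + c))) ^ 4) / ((m : ℝ) + 1) := by
        apply div_le_div_of_nonneg_right ?_ (by positivity)
        rw [Finset.mul_sum]
        exact Finset.sum_le_sum fun J _ => jensen J
    _ = (∑ c : Fin (m + 1), ∑ J ∈ Inj, (∑ i, a (J (σ i + c))) ^ 4) / ((m : ℝ) + 1) := by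
        rw [Finset.sum_comm]
    _ = (∑ _c : Fin (m + 1), ∑ J ∈ Inj, (∑ i, a (J (σ i))) ^ 4) / ((m : ℝ) + 1) := by
        rw [Finset.sum_congr rfl fun c _ => h2 c]
    _ = ∑ J ∈ Inj, (∑ i, a (J (σ i))) ^ 4 := by
        rw [Finset.sum_const]
        simp only [Finset.card_univ, Fintype.card_fin, nsmul_eq_mul]
        push_cast
        field_simp

end Main

end Stmt9

/-- for centered values, the 4th moment of the sum of a sample
without replacement is at most that of a sample with replacement.
Expectations are written as averages over all index functions / injections. -/
theorem stmt_9 (n k : ℕ) (hn : 0 < n) (hk : k ≤ n) (a : Fin n → ℝ)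
    (hcent : ∑ i, a i = 0) :
    (1 / ((Finset.univ.filter fun J : Fin k → Fin n => Function.Injective J).card : ℝ)) *
      ∑ J ∈ Finset.univ.filter (fun J : Fin k → Fin n => Function.Injective J),
        (∑ i, a (J i)) ^ 4 ≤
    (1 / (n ^ k : ℝ)) * ∑ I : Fin k → Fin n, (∑ i, a (I i)) ^ 4 := by
  classical
  rcases Nat.eq_zero_or_pos k with rfl | hkpos
  · simp
  obtain ⟨m, rfl⟩ : ∃ m, k = m + 1 := ⟨k - 1, by omega⟩
  have hstar := fun (I' : Fin (m + 1) → Fin n) => Stmt9.star a (Stmt9.patt I')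
  have hdiamond := Stmt9.diamond (k := m + 1) (n := n)
    (fun I => (∑ i, a (I i)) ^ 4)
  have hNval : (Finset.univ.filter
      fun J : Fin (m + 1) → Fin n => Function.Injective J).card
      = n.descFactorial (m + 1) := Stmt9.card_inj_eq
  have hNpos : 0 < n.descFactorial (m + 1) := Nat.pos_of_ne_zero (fun h => by
    rw [Nat.descFactorial_eq_zero_iff_lt] at h; omega)
  have key : (n : ℝ) ^ (m + 1) *
      (∑ J ∈ Finset.univ.filter (fun J : Fin (m + 1) → Fin n => Function.Injective J),
        (∑ i, a (J i)) ^ 4)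
      ≤ (n.descFactorial (m + 1) : ℝ) *
        ∑ I : Fin (m + 1) → Fin n, (∑ i, a (I i)) ^ 4 := by
    calc (n : ℝ) ^ (m + 1) *
        (∑ J ∈ Finset.univ.filter (fun J : Fin (m + 1) → Fin n => Function.Injective J),
          (∑ i, a (J i)) ^ 4)
        = ∑ _I' : Fin (m + 1) → Fin n,
            (∑ J ∈ Finset.univ.filter (fun J : Fin (m + 1) → Fin n => Function.Injective J),
              (∑ i, a (J i)) ^ 4) := by
          rw [Finset.sum_const]
          simp only [Finset.card_univ, Fintype.card_fun, Fintype.card_fin, nsmul_eq_mul]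
          push_cast
          ring
      _ ≤ ∑ I' : Fin (m + 1) → Fin n,
            ∑ J ∈ Finset.univ.filter (fun J : Fin (m + 1) → Fin n => Function.Injective J),
              (∑ i, a (J (Stmt9.patt I' i))) ^ 4 :=
          Finset.sum_le_sum fun I' _ => hstar I'
      _ = (n.descFactorial (m + 1) : ℝ) *
            ∑ I : Fin (m + 1) → Fin n, (∑ i, a (I i)) ^ 4 := hdiamond
  rw [hNval]
  have h1 : (0 : ℝ) < (n.descFactorial (m + 1) : ℝ) := by exact_mod_cast hNpos
  have h2 : (0 : ℝ) < (n : ℝ) ^ (m + 1) := by positivity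
  rw [one_div, one_div, inv_mul_eq_div, inv_mul_eq_div, div_le_div_iff₀ h1 h2]
  linear_combination key
end
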